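/- Let R be a finite-dimensional commutative local associative unital algebra over a field K of characteristic zero, with maximal ideal m, and let U ⊆ m be a hyperplane in m (a subspace of codimension 1 in m) that generates R as a K-algebra. If m^3 ⊆ U, then there exists a symmetric K-bilinear form B on R such that B(1,1) = 0, the rank of B is at least 3 (dim_K R − dim_K rad(B) ≥ 3 where rad(B) = {c : B(c, R) = 0}), and B(u·b, c) + B(b, u·c) = 0 for all u ∈ U and b, c ∈ R. (This is the 'if' direction of the theorem: an H-pair (R, U) is quadratic, i.e., defines a generically transitive action on a quadric hypersurface, if and only if m^3 ⊆ U.) -/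

import Mathlib

open Submodule Module

set_option maxHeartbeats 1000000 in
/-- the 'if' direction of the quadratic H-pair theorem: let `R` be a
finite-dimensional commutative local `K`-algebra (char K = 0) with maximal ideal `m`, and
`U ⊆ m` a hyperplane in `m` generating `R` as a `K`-algebra.  If `m³ ⊆ U`, then there is a
symmetric bilinear form `B` on `R` with `B(1,1) = 0`, of rank at least `3`, such that
`B(u·b, c) + B(b, u·c) = 0` for all `u ∈ U` and `b, c ∈ R`. -/
theorem stmt17 (K R : Type*) [Field K] [CharZero K] [CommRing R] [Algebra K R]
    [IsLocalRing R] [FiniteDimensional K R]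
    (U : Submodule K R)
    (hUm : U ≤ (IsLocalRing.maximalIdeal R).restrictScalars K)
    (hhyp : Module.finrank K U + 1 =
      Module.finrank K ↥((IsLocalRing.maximalIdeal R).restrictScalars K))
    (hgen : Algebra.adjoin K (U : Set R) = ⊤)
    (hcube : (IsLocalRing.maximalIdeal R ^ 3).restrictScalars K ≤ U) :
    ∃ B : R →ₗ[K] R →ₗ[K] K,
      (∀ x y : R, B x y = B y x) ∧
      B 1 1 = 0 ∧
      Module.finrank K ↥(LinearMap.ker B) + 3 ≤ Module.finrank K R ∧
      ∀ u ∈ U, ∀ b c : R, B (u * b) c + B b (u * c) = 0 := by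
  classical
  set M : Submodule K R := (IsLocalRing.maximalIdeal R).restrictScalars K with hM
  -- 1 ∉ M
  have h1M : (1:R) ∉ M := by
    intro h
    exact (IsLocalRing.maximalIdeal.isMaximal R).ne_top ((Ideal.eq_top_iff_one _).2 h)
  -- products of elements of M stay in M
  have hMmul : ∀ x y : R, x ∈ M → x * y ∈ M := by
    intro x y hx
    exact Ideal.mul_mem_right y _ hx
  -- span of 1 is disjoint from M
  have hdisj1 : Disjoint (span K {(1:R)}) M := by
    rw [disjoint_def]
    intro x hx hxM
    obtain ⟨t, rfl⟩ := mem_span_singleton.1 hx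
    rcases eq_or_ne t 0 with rfl | ht
    · simp
    · have := M.smul_mem t⁻¹ hxM
      rw [smul_smul, inv_mul_cancel₀ ht, one_smul] at this
      exact absurd this h1M
  -- R = K·1 + M  (since U ⊆ M generates R)
  have hsup1 : span K {(1:R)} ⊔ M = ⊤ := by
    have hmul : ∀ x y : R, x ∈ span K {(1:R)} ⊔ M → y ∈ span K {(1:R)} ⊔ M →
        x * y ∈ span K {(1:R)} ⊔ M := by
      intro x y hx hy
      obtain ⟨a, ha, xm, hxm, rfl⟩ := mem_sup.1 hx
      obtain ⟨b, hb, ym, hym, rfl⟩ := mem_sup.1 hy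
      have : (a + xm) * (b + ym) = a * b + (a * ym + (b + ym) * xm) := by ring
      rw [this]
      refine add_mem (le_sup_left (α := Submodule K R) ?_)
        (le_sup_right (α := Submodule K R) ?_)
      · obtain ⟨s, rfl⟩ := mem_span_singleton.1 ha
        obtain ⟨t, rfl⟩ := mem_span_singleton.1 hb
        exact mem_span_singleton.2 ⟨s * t, by rw [mul_smul]; simp [smul_smul, mul_comm]⟩
      · refine add_mem ?_ ?_
        · exact Ideal.mul_mem_left _ _ hym
        · exact Ideal.mul_mem_left _ _ hxm
    have h1 : (1:R) ∈ span K {(1:R)} ⊔ M :=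
      le_sup_left (α := Submodule K R) (mem_span_singleton_self 1)
    let A : Subalgebra K R := Submodule.toSubalgebra (span K {(1:R)} ⊔ M) h1 hmul
    have hUA : (U : Set R) ⊆ A := fun u hu =>
      le_sup_right (α := Submodule K R) (hUm hu)
    have htop : (⊤ : Subalgebra K R) ≤ A := hgen ▸ Algebra.adjoin_le hUA
    refine top_le_iff.1 fun x _ => htop trivial
  -- pick p ∈ M \ U
  have hUM : U < M := by
    refine lt_of_le_of_ne hUm fun h => ?_
    rw [h] at hhyp; omega
  obtain ⟨p, hpM, hpU⟩ := SetLike.exists_of_lt hUM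
  have hp0 : p ≠ 0 := fun h => hpU (h ▸ U.zero_mem)
  -- U ⊔ span p = M
  have hUp : U ⊔ span K {p} = M := by
    have hle : U ⊔ span K {p} ≤ M := sup_le hUm ((span_singleton_le_iff_mem p M).2 hpM)
    have hlt : U < U ⊔ span K {p} :=
      lt_of_le_of_ne le_sup_left fun h => hpU (h ▸ le_sup_right (α := Submodule K R)
        (mem_span_singleton_self p) : p ∈ U)
    have h1 : finrank K U < finrank K ↥(U ⊔ span K {p}) :=
      Submodule.finrank_lt_finrank_of_lt hlt
    have h2 : finrank K ↥(U ⊔ span K {p}) ≤ finrank K M := Submodule.finrank_mono hle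
    exact Submodule.eq_of_le_of_finrank_eq hle (by omega)
  -- W = K·1 ⊕ U
  set W : Submodule K R := span K {(1:R)} ⊔ U with hW
  have hUW : U ≤ W := le_sup_right
  have h1W : (1:R) ∈ W := le_sup_left (α := Submodule K R) (mem_span_singleton_self 1)
  have hpW : p ∉ W := by
    intro h
    obtain ⟨a, ha, u, hu, hpu⟩ := mem_sup.1 h
    obtain ⟨t, rfl⟩ := mem_span_singleton.1 ha
    have htM : t • (1:R) ∈ M := by
      have : t • (1:R) = p - u := by rw [← hpu]; ring
      rw [this]; exact sub_mem hpM (hUm hu)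
    rcases eq_or_ne t 0 with rfl | ht
    · rw [zero_smul, zero_add] at hpu
      exact hpU (hpu ▸ hu)
    · have := M.smul_mem t⁻¹ htM
      rw [smul_smul, inv_mul_cancel₀ ht, one_smul] at this
      exact h1M this
  have hdisjW : Disjoint W (span K {p}) := by
    rw [disjoint_def]
    intro x hx hxp
    obtain ⟨t, rfl⟩ := mem_span_singleton.1 hxp
    rcases eq_or_ne t 0 with rfl | ht
    · simp
    · have := W.smul_mem t⁻¹ hx
      rw [smul_smul, inv_mul_cancel₀ ht, one_smul] at this
      exact absurd this hpW
  have hsupW : W ⊔ span K {p} = ⊤ := by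
    rw [hW, sup_assoc, hUp, hsup1]
  have hcomplW : IsCompl W (span K {p}) := ⟨hdisjW, codisjoint_iff.2 hsupW⟩
  have hcompl1 : IsCompl (span K {(1:R)}) M := by
    refine ⟨hdisj1, codisjoint_iff.2 hsup1⟩
  -- the functionals π and ℓ
  set π : R →ₗ[K] K :=
    ((LinearEquiv.toSpanNonzeroSingleton K R 1 one_ne_zero).symm :
      span K {(1:R)} →ₗ[K] K) ∘ₗ Submodule.projectionOnto _ _ hcompl1 with hπ
  set ℓ : R →ₗ[K] K :=
    ((LinearEquiv.toSpanNonzeroSingleton K R p hp0).symm :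
      span K {p} →ₗ[K] K) ∘ₗ Submodule.projectionOnto _ _ hcomplW.symm with hℓ
  have hπ1 : π 1 = 1 := by
    rw [hπ]
    simp only [LinearMap.coe_comp, Function.comp_apply, LinearEquiv.coe_coe]
    rw [Submodule.projectionOnto_apply_of_mem_left hcompl1 (mem_span_singleton_self 1)]
    rw [LinearEquiv.symm_apply_eq, LinearEquiv.toSpanNonzeroSingleton_one]
  have hπM : ∀ x ∈ M, π x = 0 := by
    intro x hx
    rw [hπ]
    simp only [LinearMap.coe_comp, Function.comp_apply, LinearEquiv.coe_coe]
    rw [Submodule.projectionOnto_apply_of_mem_right hcompl1 hx]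
    simp
  have hℓp : ℓ p = 1 := by
    rw [hℓ]
    simp only [LinearMap.coe_comp, Function.comp_apply, LinearEquiv.coe_coe]
    rw [Submodule.projectionOnto_apply_of_mem_left hcomplW.symm (mem_span_singleton_self p)]
    rw [LinearEquiv.symm_apply_eq, LinearEquiv.toSpanNonzeroSingleton_one]
  have hℓW : ∀ x ∈ W, ℓ x = 0 := by
    intro x hx
    rw [hℓ]
    simp only [LinearMap.coe_comp, Function.comp_apply, LinearEquiv.coe_coe]
    rw [Submodule.projectionOnto_apply_of_mem_right hcomplW.symm hx]
    simp
  have hℓ1 : ℓ 1 = 0 := hℓW 1 h1W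
  have hℓU : ∀ u ∈ U, ℓ u = 0 := fun u hu => hℓW u (hUW hu)
  -- decomposition along 1
  have hdec1 : ∀ b : R, b - π b • 1 ∈ M := by
    intro b
    have hb : b ∈ span K {(1:R)} ⊔ M := hsup1 ▸ mem_top
    obtain ⟨a, ha, z, hz, hbz⟩ := mem_sup.1 hb
    obtain ⟨t, rfl⟩ := mem_span_singleton.1 ha
    have : π b = t := by
      rw [← hbz, map_add, map_smul, hπ1, hπM z hz, smul_eq_mul]; ring
    rw [this]
    have : b - t • 1 = z := by rw [← hbz]; ring
    rw [this]; exact hz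
  -- decomposition along p : ker ℓ ⊆ W
  have hkerℓ : ∀ x : R, ℓ x = 0 → x ∈ W := by
    intro x hx
    have hxt : x ∈ W ⊔ span K {p} := hsupW ▸ mem_top
    obtain ⟨w, hw, z, hz, hxz⟩ := mem_sup.1 hxt
    obtain ⟨t, rfl⟩ := mem_span_singleton.1 hz
    have : ℓ x = t := by
      rw [← hxz, map_add, map_smul, hℓp, hℓW w hw, smul_eq_mul]; ring
    rw [hx] at this
    rw [← hxz, ← this, zero_smul, add_zero]
    exact hw
  -- ℓ kills m³
  have hℓ3 : ∀ x y z : R, x ∈ M → y ∈ M → z ∈ M → ℓ (x * y * z) = 0 := by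
    intro x y z hx hy hz
    refine hℓW _ (hUW (hcube ?_))
    show x * y * z ∈ IsLocalRing.maximalIdeal R ^ 3
    rw [pow_succ, pow_two]
    exact Ideal.mul_mem_mul (Ideal.mul_mem_mul hx hy) hz
  -- the bilinear form
  set B : R →ₗ[K] R →ₗ[K] K := LinearMap.mk₂ K
    (fun x y => ℓ (x * y) - 2 * π x * ℓ y - 2 * ℓ x * π y)
    (by intro x x' y; simp only [add_mul, map_add]; ring)
    (by intro c x y; simp only [smul_mul_assoc, map_smul, smul_eq_mul]; ring)
    (by intro x y y'; simp only [mul_add, map_add]; ring)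
    (by intro c x y; simp only [mul_smul_comm, map_smul, smul_eq_mul]; ring)
    with hB
  have hBapply : ∀ x y : R, B x y = ℓ (x * y) - 2 * π x * ℓ y - 2 * ℓ x * π y := by
    intro x y; rw [hB]; rfl
  refine ⟨B, ?_, ?_, ?_, ?_⟩
  · intro x y
    rw [hBapply, hBapply, mul_comm x y]; ring
  · rw [hBapply]; simp [hℓ1]
  · -- rank ≥ 3
    -- first find u₀ v₀ ∈ U with ℓ (u₀ * v₀) ≠ 0
    obtain ⟨u₀, hu₀, v₀, hv₀, huv⟩ :
        ∃ u ∈ U, ∃ v ∈ U, ℓ (u * v) ≠ 0 := by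
      by_contra hcon
      push_neg at hcon
      have hmulW : ∀ x y : R, x ∈ W → y ∈ W → x * y ∈ W := by
        intro x y hx hy
        obtain ⟨a, ha, u, hu, rfl⟩ := mem_sup.1 hx
        obtain ⟨b, hb, v, hv, rfl⟩ := mem_sup.1 hy
        obtain ⟨s, rfl⟩ := mem_span_singleton.1 ha
        obtain ⟨t, rfl⟩ := mem_span_singleton.1 hb
        have hexp : (s • (1:R) + u) * (t • (1:R) + v)
            = (s * t) • (1:R) + (s • v + t • u) + u * v := by
          simp only [Algebra.smul_def, map_mul]; ring
        rw [hexp]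
        refine add_mem (add_mem ?_ ?_) ?_
        · exact le_sup_left (α := Submodule K R) (mem_span_singleton.2 ⟨s * t, rfl⟩)
        · exact hUW (add_mem (U.smul_mem s hv) (U.smul_mem t hu))
        · exact hkerℓ _ (hcon u hu v hv)
      let A : Subalgebra K R := Submodule.toSubalgebra W h1W hmulW
      have hUA : (U : Set R) ⊆ A := fun u hu => hUW hu
      have htop : (⊤ : Subalgebra K R) ≤ A := hgen ▸ Algebra.adjoin_le hUA
      exact hpW (htop (trivial : p ∈ (⊤ : Subalgebra K R)))
    -- values of B
    have hπp : π p = 0 := hπM p hpM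
    have hπu : π u₀ = 0 := hπM u₀ (hUm hu₀)
    have hπv : π v₀ = 0 := hπM v₀ (hUm hv₀)
    have hℓu : ℓ u₀ = 0 := hℓU u₀ hu₀
    have hℓv : ℓ v₀ = 0 := hℓU v₀ hv₀
    have hB11 : B 1 1 = 0 := by rw [hBapply, one_mul, hℓ1]; ring
    have hBp1 : B p 1 = -1 := by rw [hBapply, mul_one, hℓ1, hℓp, hπ1]; ring
    have hBu1 : B u₀ 1 = 0 := by rw [hBapply, mul_one, hℓ1, hℓu]; ring
    have hB1v : B 1 v₀ = 0 := by rw [hBapply, one_mul, hℓ1, hℓv]; ring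
    have hBuv : B u₀ v₀ = ℓ (u₀ * v₀) := by
      rw [hBapply, hℓu, hπu]; ring
    have hB1p : B 1 p = -1 := by rw [hBapply, one_mul, hℓ1, hℓp, hπ1]; ring
    -- the three functionals B 1, B p, B u₀ are independent
    have hind : LinearIndependent K ![B 1, B p, B u₀] := by
      rw [Fintype.linearIndependent_iff]
      intro g hg
      have hgx : ∀ x : R, g 0 * B 1 x + g 1 * B p x + g 2 * B u₀ x = 0 := by
        intro x
        have h := congrArg (fun f : R →ₗ[K] K => f x) hg
        simp only [Fin.sum_univ_three, Matrix.cons_val_zero, Matrix.cons_val_one,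
          Matrix.head_cons, Matrix.cons_val_two, Matrix.tail_cons, LinearMap.add_apply,
          LinearMap.smul_apply, smul_eq_mul, LinearMap.zero_apply] at h
        exact h
      have h1 := hgx 1
      rw [hB11, hBp1, hBu1] at h1
      have hg1 : g 1 = 0 := by linear_combination -h1
      have h2 := hgx v₀
      rw [hB1v, hBuv] at h2
      have hg2 : g 2 = 0 := by
        rw [hg1] at h2
        have : g 2 * ℓ (u₀ * v₀) = 0 := by linear_combination h2
        exact (mul_eq_zero.1 this).resolve_right huv
      have h3 := hgx p
      rw [hB1p] at h3
      have hg0 : g 0 = 0 := by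
        rw [hg1, hg2] at h3
        linear_combination -h3
      intro i
      fin_cases i <;> assumption
    -- conclude rank ≥ 3
    have hspan : span K (Set.range ![B 1, B p, B u₀]) ≤ LinearMap.range B := by
      rw [span_le]
      rintro f ⟨i, rfl⟩
      fin_cases i
      · exact ⟨1, rfl⟩
      · exact ⟨p, rfl⟩
      · exact ⟨u₀, rfl⟩
    have hcard : 3 ≤ finrank K ↥(LinearMap.range B) := by
      have h1 := finrank_span_eq_card hind
      have h2 := Submodule.finrank_mono hspan
      simp only [Fintype.card_fin] at h1
      omega
    have hrn := LinearMap.finrank_range_add_finrank_ker B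
    omega
  · -- skew-invariance
    intro u hu b c
    have huM : u ∈ M := hUm hu
    have hℓu : ℓ u = 0 := hℓU u hu
    set b' : R := b - π b • 1 with hb'
    set c' : R := c - π c • 1 with hc'
    have hb'M : b' ∈ M := hdec1 b
    have hc'M : c' ∈ M := hdec1 c
    have hexp : u * b * c = (π b * π c) • u + π b • (u * c') + π c • (u * b')
        + u * b' * c' := by
      rw [hb', hc']
      simp only [Algebra.smul_def, map_mul]
      ring
    have hexp2 : u * c = π c • u + u * c' := by
      rw [hc']; simp only [Algebra.smul_def]; ring
    have hexp3 : u * b = π b • u + u * b' := by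
      rw [hb']; simp only [Algebra.smul_def]; ring
    have h3 : ℓ (u * b' * c') = 0 := hℓ3 u b' c' huM hb'M hc'M
    have key : ℓ (u * b * c) = π b * ℓ (u * c') + π c * ℓ (u * b') := by
      rw [hexp, map_add, map_add, map_add, map_smul, map_smul, map_smul, hℓu, h3,
        smul_eq_mul, smul_eq_mul, smul_eq_mul]
      ring
    have kuc : ℓ (u * c) = ℓ (u * c') := by
      rw [hexp2, map_add, map_smul, hℓu, smul_eq_mul]; ring
    have kub : ℓ (u * b) = ℓ (u * b') := by
      rw [hexp3, map_add, map_smul, hℓu, smul_eq_mul]; ring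
    have hπub : π (u * b) = 0 := hπM _ (hMmul u b huM)
    have hπuc : π (u * c) = 0 := hπM _ (hMmul u c huM)
    rw [hBapply, hBapply, hπub, hπuc]
    have hbuc : b * (u * c) = u * b * c := by ring
    rw [hbuc]
    rw [key, kuc, kub]
    ring
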